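/- arXiv:quant-ph/0509041 — 7 statements merged into one kernel-verified Lean document; each statement's English description precedes it below -/
import Mathlib

section
/- For every nonzero vector v ∈ ℝ³, the linear span of the set { T : T is a real symmetric positive semidefinite 3×3 matrix and vᵀ T v = 0 } is a 3-dimensional subspace of the space of real symmetric 3×3 matrices. (Lemma 2: the span of the intersection of the boundary of the positive semidefinite cone with one of its tangent spaces is 3-dimensional.) -/
open Matrix

noncomputable section AuxStmt9

abbrev e₀ : Fin 3 → ℝ := Pi.single 0 1

def Sset9 (v : Fin 3 → ℝ) : Set (Matrix (Fin 3) (Fin 3) ℝ) :=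
  {T | T.IsSymm ∧ T.PosSemidef ∧ v ⬝ᵥ T.mulVec v = 0}

def K9 : Submodule ℝ (Matrix (Fin 3) (Fin 3) ℝ) where
  carrier := {T | T.IsSymm ∧ ∀ j, T j 0 = 0}
  add_mem' := by
    rintro a b ⟨ha, ha0⟩ ⟨hb, hb0⟩
    exact ⟨ha.add hb, fun j => by simp [Matrix.add_apply, ha0 j, hb0 j]⟩
  zero_mem' := ⟨Matrix.isSymm_zero, fun j => rfl⟩
  smul_mem' := by
    rintro c a ⟨ha, ha0⟩
    exact ⟨ha.smul c, fun j => by simp [Matrix.smul_apply, ha0 j]⟩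

lemma mem_K9 {T : Matrix (Fin 3) (Fin 3) ℝ} :
    T ∈ K9 ↔ T.IsSymm ∧ ∀ j, T j 0 = 0 := Iff.rfl

def A9 : Matrix (Fin 3) (Fin 3) ℝ := fun i j => if i = 1 ∧ j = 1 then 1 else 0
def B9 : Matrix (Fin 3) (Fin 3) ℝ := fun i j => if i = 2 ∧ j = 2 then 1 else 0
def C9 : Matrix (Fin 3) (Fin 3) ℝ :=
  fun i j => if (i = 1 ∨ i = 2) ∧ (j = 1 ∨ j = 2) then 1 else 0

lemma A9_mem : A9 ∈ Sset9 e₀ := by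
  refine ⟨?_, ⟨?_, fun x => ?_⟩, ?_⟩
  · ext i j; fin_cases i <;> fin_cases j <;> simp [A9]
  · ext i j; fin_cases i <;> fin_cases j <;> simp [A9]
  · revert x; refine (posSemidef_iff_dotProduct_mulVec.mpr ⟨by ext i j; fin_cases i <;> fin_cases j <;> simp [A9], fun x => ?_⟩).2
    simp only [star_trivial, dotProduct, mulVec, Fin.sum_univ_three, A9]
    norm_num [Fin.ext_iff]
    exact mul_self_nonneg _
  · simp [A9, mulVec, dotProduct, Fin.sum_univ_three, Pi.single_apply]

lemma B9_mem : B9 ∈ Sset9 e₀ := by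
  refine ⟨?_, ⟨?_, fun x => ?_⟩, ?_⟩
  · ext i j; fin_cases i <;> fin_cases j <;> simp [B9]
  · ext i j; fin_cases i <;> fin_cases j <;> simp [B9]
  · revert x; refine (posSemidef_iff_dotProduct_mulVec.mpr ⟨by ext i j; fin_cases i <;> fin_cases j <;> simp [B9], fun x => ?_⟩).2
    simp only [star_trivial, dotProduct, mulVec, Fin.sum_univ_three, B9]
    norm_num [Fin.ext_iff]
    exact mul_self_nonneg _
  · simp [B9, mulVec, dotProduct, Fin.sum_univ_three, Pi.single_apply]

lemma C9_mem : C9 ∈ Sset9 e₀ := by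
  refine ⟨?_, ⟨?_, fun x => ?_⟩, ?_⟩
  · ext i j; fin_cases i <;> fin_cases j <;> simp [C9]
  · ext i j; fin_cases i <;> fin_cases j <;> simp [C9]
  · revert x; refine (posSemidef_iff_dotProduct_mulVec.mpr ⟨by ext i j; fin_cases i <;> fin_cases j <;> simp [C9], fun x => ?_⟩).2
    simp only [star_trivial, dotProduct, mulVec, Fin.sum_univ_three, C9]
    norm_num [Fin.ext_iff]
    nlinarith [sq_nonneg (x 1 + x 2)]
  · simp [C9, mulVec, dotProduct, Fin.sum_univ_three, Pi.single_apply]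

lemma span_Sset9_e₀ : Submodule.span ℝ (Sset9 e₀) = K9 := by
  apply le_antisymm
  · rw [Submodule.span_le]
    rintro T ⟨hs, hpsd, hdot⟩
    have h0 : T *ᵥ e₀ = 0 := by
      rw [← hpsd.dotProduct_mulVec_zero_iff e₀]
      simpa using hdot
    refine ⟨hs, fun j => ?_⟩
    have := congrFun h0 j
    simpa [mulVec_single] using this
  · rintro T ⟨hs, h0⟩
    have hT : T = T 1 1 • A9 + T 2 2 • B9 + T 1 2 • (C9 - A9 - B9) := by
      have h01 : T 0 1 = T 1 0 := hs.apply 1 0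
      have h02 : T 0 2 = T 2 0 := hs.apply 2 0
      have h21 : T 2 1 = T 1 2 := hs.apply 1 2
      ext i j
      fin_cases i <;> fin_cases j <;>
        simp [A9, B9, C9, Matrix.add_apply, Matrix.sub_apply, Matrix.smul_apply,
          h0 0, h0 1, h0 2, h01, h02, h21]
    rw [hT]
    have hA := Submodule.subset_span (R := ℝ) A9_mem
    have hB := Submodule.subset_span (R := ℝ) B9_mem
    have hC := Submodule.subset_span (R := ℝ) C9_mem
    exact Submodule.add_mem _
      (Submodule.add_mem _ (Submodule.smul_mem _ _ hA) (Submodule.smul_mem _ _ hB))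
      (Submodule.smul_mem _ _ (Submodule.sub_mem _ (Submodule.sub_mem _ hC hA) hB))

def K9equiv : K9 ≃ₗ[ℝ] (Fin 3 → ℝ) where
  toFun T := ![T.1 1 1, T.1 1 2, T.1 2 2]
  map_add' a b := by ext i; fin_cases i <;> simp [Matrix.add_apply]
  map_smul' c a := by ext i; fin_cases i <;> simp [Matrix.smul_apply]
  invFun c := ⟨fun i j =>
      if i = 1 ∧ j = 1 then c 0 else if i = 1 ∧ j = 2 then c 1
      else if i = 2 ∧ j = 1 then c 1 else if i = 2 ∧ j = 2 then c 2 else 0,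
    by
      constructor
      · ext i j; fin_cases i <;> fin_cases j <;> erw [Matrix.transpose_apply] <;> simp
      · intro j; fin_cases j <;> simp⟩
  left_inv T := by
    obtain ⟨T, hs, h0⟩ := T
    have h01 : T 0 1 = T 1 0 := hs.apply 1 0
    have h02 : T 0 2 = T 2 0 := hs.apply 2 0
    have h21 : T 2 1 = T 1 2 := hs.apply 1 2
    ext i j
    fin_cases i <;> fin_cases j <;> simp [h0 0, h0 1, h0 2, h01, h02, h21]
  right_inv c := by ext i; fin_cases i <;> simp

lemma finrank_K9 : Module.finrank ℝ K9 = 3 := by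
  rw [K9equiv.finrank_eq]
  simp

end AuxStmt9

section Conj

lemma exists_unit9 (v : Fin 3 → ℝ) (hv : v ≠ 0) :
    ∃ M : Matrix (Fin 3) (Fin 3) ℝ, IsUnit M ∧ M *ᵥ e₀ = v := by
  have hex : ∃ i, v i ≠ 0 := by
    by_contra h; push_neg at h; exact hv (funext h)
  obtain ⟨i, hi⟩ := hex
  fin_cases i
  · refine ⟨fun r c => if c = 0 then v r else if c = r then 1 else 0, ?_, ?_⟩
    · refine (Matrix.isUnit_iff_isUnit_det _).mpr ?_
      refine isUnit_iff_ne_zero.mpr ?_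
      erw [Matrix.det_fin_three]
      simp [Fin.ext_iff]
      simpa using hi
    · funext r; simp [mulVec, dotProduct, Pi.single_apply]
  · refine ⟨fun r c => if c = 0 then v r else if c = 1 then (if r = 0 then 1 else 0)
        else (if r = 2 then 1 else 0), ?_, ?_⟩
    · refine (Matrix.isUnit_iff_isUnit_det _).mpr ?_
      refine isUnit_iff_ne_zero.mpr ?_
      erw [Matrix.det_fin_three]
      simp [Fin.ext_iff]
      simpa using hi
    · funext r; simp [mulVec, dotProduct, Pi.single_apply]
  · refine ⟨fun r c => if c = 0 then v r else if c = 1 then (if r = 0 then 1 else 0)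
        else (if r = 1 then 1 else 0), ?_, ?_⟩
    · refine (Matrix.isUnit_iff_isUnit_det _).mpr ?_
      refine isUnit_iff_ne_zero.mpr ?_
      erw [Matrix.det_fin_three]
      simp [Fin.ext_iff]
      simpa using hi
    · funext r; simp [mulVec, dotProduct, Pi.single_apply]

variable (M : Matrix (Fin 3) (Fin 3) ℝ) (hM : IsUnit M)

noncomputable def conj9 (hM : IsUnit M) : Matrix (Fin 3) (Fin 3) ℝ ≃ₗ[ℝ] Matrix (Fin 3) (Fin 3) ℝ := by
  have hd : IsUnit M.det := (Matrix.isUnit_iff_isUnit_det M).mp hM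
  exact
  { toFun := fun T => (M⁻¹)ᵀ * T * M⁻¹
    invFun := fun T => Mᵀ * T * M
    map_add' := fun a b => by noncomm_ring
    map_smul' := fun c a => by
      simp [Matrix.mul_smul, Matrix.smul_mul]
    left_inv := fun T => by
      dsimp only
      have h1 : Mᵀ * ((M⁻¹)ᵀ * T * M⁻¹) * M = (Mᵀ * (M⁻¹)ᵀ) * T * (M⁻¹ * M) := by
        noncomm_ring
      rw [h1, ← Matrix.transpose_mul, Matrix.nonsing_inv_mul M hd,
        Matrix.transpose_one, Matrix.one_mul, Matrix.mul_one]
    right_inv := fun T => by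
      dsimp only
      have h1 : (M⁻¹)ᵀ * (Mᵀ * T * M) * M⁻¹ = ((M⁻¹)ᵀ * Mᵀ) * T * (M * M⁻¹) := by
        noncomm_ring
      rw [h1, ← Matrix.transpose_mul, Matrix.mul_nonsing_inv M hd,
        Matrix.transpose_one, Matrix.one_mul, Matrix.mul_one] }

lemma conj9_dot (A : Matrix (Fin 3) (Fin 3) ℝ) (T : Matrix (Fin 3) (Fin 3) ℝ)
    (w : Fin 3 → ℝ) : w ⬝ᵥ (Aᵀ * T * A) *ᵥ w = (A *ᵥ w) ⬝ᵥ T *ᵥ (A *ᵥ w) := by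
  rw [← Matrix.mulVec_mulVec, ← Matrix.mulVec_mulVec, Matrix.dotProduct_mulVec,
    Matrix.vecMul_transpose]

lemma conj9_symm {T : Matrix (Fin 3) (Fin 3) ℝ} (hT : T.IsSymm)
    (A : Matrix (Fin 3) (Fin 3) ℝ) : (Aᵀ * T * A).IsSymm := by
  unfold Matrix.IsSymm
  rw [Matrix.transpose_mul, Matrix.transpose_mul, Matrix.transpose_transpose, hT.eq,
    Matrix.mul_assoc]

lemma conj9_psd {T : Matrix (Fin 3) (Fin 3) ℝ} (hT : T.PosSemidef)
    (A : Matrix (Fin 3) (Fin 3) ℝ) : (Aᵀ * T * A).PosSemidef := by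
  have := hT.conjTranspose_mul_mul_same A
  rwa [A.conjTranspose_eq_transpose_of_trivial] at this

lemma image_conj9 (v : Fin 3 → ℝ) (hMv : M *ᵥ e₀ = v) :
    (conj9 M hM) '' Sset9 e₀ = Sset9 v := by
  have hd : IsUnit M.det := (Matrix.isUnit_iff_isUnit_det M).mp hM
  have hinv : M⁻¹ *ᵥ v = e₀ := by
    rw [← hMv, Matrix.mulVec_mulVec, Matrix.nonsing_inv_mul M hd, Matrix.one_mulVec]
  ext T
  constructor
  · rintro ⟨S, ⟨hs, hpsd, hdot⟩, rfl⟩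
    refine ⟨conj9_symm hs _, conj9_psd hpsd _, ?_⟩
    show v ⬝ᵥ ((M⁻¹)ᵀ * S * M⁻¹) *ᵥ v = 0
    rw [conj9_dot, hinv, hdot]
  · rintro ⟨hs, hpsd, hdot⟩
    refine ⟨Mᵀ * T * M, ⟨conj9_symm hs _, conj9_psd hpsd _, ?_⟩, ?_⟩
    · rw [conj9_dot, hMv, hdot]
    · exact (conj9 M hM).apply_symm_apply T

end Conj


/-- Lemma 2: for every nonzero `v ∈ ℝ³`, the span of the set of real symmetric positive
semidefinite 3×3 matrices `T` with `vᵀ T v = 0` (the intersection of the boundary of the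
positive semidefinite cone with the corresponding tangent space) is 3-dimensional. -/
theorem stmt_9 (v : Fin 3 → ℝ) (hv : v ≠ 0) :
    Module.finrank ℝ (Submodule.span ℝ
      {T : Matrix (Fin 3) (Fin 3) ℝ | T.IsSymm ∧ T.PosSemidef ∧ v ⬝ᵥ T.mulVec v = 0}) = 3 := by
  obtain ⟨M, hM, hMv⟩ := exists_unit9 v hv
  have h1 : {T : Matrix (Fin 3) (Fin 3) ℝ | T.IsSymm ∧ T.PosSemidef ∧ v ⬝ᵥ T.mulVec v = 0}
      = (conj9 M hM) '' Sset9 e₀ := (image_conj9 M hM v hMv).symm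
  have h2 : Submodule.span ℝ (⇑(conj9 M hM) '' Sset9 e₀)
      = Submodule.map (↑(conj9 M hM) : Matrix (Fin 3) (Fin 3) ℝ →ₗ[ℝ] Matrix (Fin 3) (Fin 3) ℝ)
        (Submodule.span ℝ (Sset9 e₀)) := (Submodule.map_span _ _).symm
  rw [h1, h2, LinearEquiv.finrank_map_eq, span_Sset9_e₀, finrank_K9]
end

section
/- Let C be a real symmetric 3×3 matrix such that D = 2((Tr C)·I₃ − C) is positive semidefinite and singular, and let v be a nonzero vector with Dv = 0. Then there exist orthonormal vectors w₁, w₂, both orthogonal to v, with w₁ᵀ C w₁ = 0 and w₂ᵀ C w₂ = 0; moreover, if there exists a vector u orthogonal to v with Cu ≠ 0, then w₁, w₂ can be chosen so that additionally w₁ᵀ C w₂ ≠ 0. (This establishes the conditions of Theorem 1 for a dynamics lying on the boundary of the positivity cone.) -/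
open Matrix

lemma stmt12_symm_dot (C : Matrix (Fin 3) (Fin 3) ℝ) (hC : C.IsSymm) (x y : Fin 3 → ℝ) :
    x ⬝ᵥ C.mulVec y = y ⬝ᵥ C.mulVec x := by
  rw [dotProduct_mulVec, ← hC.eq, vecMul_transpose, dotProduct_comm, hC.eq]

lemma stmt12_triple (C : Matrix (Fin 3) (Fin 3) ℝ) (e₀ e₁ e₂ : Fin 3 → ℝ)
    (h00 : e₀ ⬝ᵥ e₀ = 1) (h11 : e₁ ⬝ᵥ e₁ = 1) (h22 : e₂ ⬝ᵥ e₂ = 1)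
    (h01 : e₀ ⬝ᵥ e₁ = 0) (h02 : e₀ ⬝ᵥ e₂ = 0) (h12 : e₁ ⬝ᵥ e₂ = 0) :
    (∀ x : Fin 3 → ℝ, (e₀ ⬝ᵥ x) • e₀ + (e₁ ⬝ᵥ x) • e₁ + (e₂ ⬝ᵥ x) • e₂ = x) ∧
    C.trace = e₀ ⬝ᵥ C.mulVec e₀ + e₁ ⬝ᵥ C.mulVec e₁ + e₂ ⬝ᵥ C.mulVec e₂ := by
  set P : Matrix (Fin 3) (Fin 3) ℝ := Matrix.of fun i j => ![e₀, e₁, e₂] j i with hP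
  have hPtP : Pᵀ * P = 1 := by
    ext i j
    fin_cases i <;> fin_cases j <;>
      simp_all [hP, mul_apply, dotProduct, Fin.sum_univ_three, mul_comm]
  have hPPt : P * Pᵀ = 1 := mul_eq_one_comm.mp hPtP
  constructor
  · intro x
    have h := congrArg (fun M : Matrix (Fin 3) (Fin 3) ℝ => M *ᵥ x) hPPt
    simp only [one_mulVec] at h
    funext i
    have hi := congrFun h i
    simp [hP, mulVec, mul_apply, dotProduct, Fin.sum_univ_three] at hi ⊢
    linarith [hi]
  · have : C.trace = (Pᵀ * C * P).trace := by
      rw [Matrix.trace_mul_cycle, hPPt, Matrix.one_mul]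
    rw [this]
    simp [hP, Matrix.trace, mul_apply, mulVec, dotProduct, Fin.sum_univ_three, Matrix.diag]
    ring

lemma stmt12_inner (C : Matrix (Fin 3) (Fin 3) ℝ) (hC : C.IsSymm) (e₀ e₁ e₂ : Fin 3 → ℝ)
    (h00 : e₀ ⬝ᵥ e₀ = 1) (h11 : e₁ ⬝ᵥ e₁ = 1) (h22 : e₂ ⬝ᵥ e₂ = 1)
    (h01 : e₀ ⬝ᵥ e₁ = 0) (h02 : e₀ ⬝ᵥ e₂ = 0) (h12 : e₁ ⬝ᵥ e₂ = 0)
    (he₀ : C.mulVec e₀ = C.trace • e₀) :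
    ∃ w₁ w₂ : Fin 3 → ℝ, w₁ ⬝ᵥ w₁ = 1 ∧ w₂ ⬝ᵥ w₂ = 1 ∧ w₁ ⬝ᵥ w₂ = 0 ∧
      e₀ ⬝ᵥ w₁ = 0 ∧ e₀ ⬝ᵥ w₂ = 0 ∧
      w₁ ⬝ᵥ C.mulVec w₁ = 0 ∧ w₂ ⬝ᵥ C.mulVec w₂ = 0 ∧
      (w₁ ⬝ᵥ C.mulVec w₂ = 0 → ∀ u : Fin 3 → ℝ, e₀ ⬝ᵥ u = 0 → C.mulVec u = 0) := by
  obtain ⟨hcomp, htr⟩ := stmt12_triple C e₀ e₁ e₂ h00 h11 h22 h01 h02 h12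
  obtain ⟨α, hα⟩ : ∃ a : ℝ, e₁ ⬝ᵥ C.mulVec e₁ = a := ⟨_, rfl⟩
  obtain ⟨β, hβ⟩ : ∃ b : ℝ, e₁ ⬝ᵥ C.mulVec e₂ = b := ⟨_, rfl⟩
  have hβ' : e₂ ⬝ᵥ C.mulVec e₁ = β := by rw [stmt12_symm_dot C hC e₂ e₁, hβ]
  have hq0 : e₀ ⬝ᵥ C.mulVec e₀ = C.trace := by
    rw [he₀, dotProduct_smul, h00, smul_eq_mul, mul_one]
  have hγ : e₂ ⬝ᵥ C.mulVec e₂ = -α := by rw [hq0, hα] at htr; linarith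
  have hCe₁0 : e₀ ⬝ᵥ C.mulVec e₁ = 0 := by
    rw [stmt12_symm_dot C hC e₀ e₁, he₀, dotProduct_smul, dotProduct_comm, h01,
      smul_eq_mul, mul_zero]
  have hCe₂0 : e₀ ⬝ᵥ C.mulVec e₂ = 0 := by
    rw [stmt12_symm_dot C hC e₀ e₂, he₀, dotProduct_smul, dotProduct_comm, h02,
      smul_eq_mul, mul_zero]
  have h21 : e₂ ⬝ᵥ e₁ = 0 := by rw [dotProduct_comm]; exact h12
  have dotw : ∀ a b c d : ℝ, (a • e₁ + b • e₂) ⬝ᵥ (c • e₁ + d • e₂) = a * c + b * d := by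
    intro a b c d
    simp only [dotProduct_add, dotProduct_smul, add_dotProduct, smul_dotProduct, smul_eq_mul,
      h11, h22, h12, h21]
    ring
  have dote₀ : ∀ a b : ℝ, e₀ ⬝ᵥ (a • e₁ + b • e₂) = 0 := by
    intro a b
    simp [dotProduct_add, dotProduct_smul, h01, h02]
  have dotC : ∀ a b c d : ℝ, (a • e₁ + b • e₂) ⬝ᵥ C.mulVec (c • e₁ + d • e₂)
      = a * c * α + (a * d + b * c) * β - b * d * α := by
    intro a b c d
    simp only [mulVec_add, mulVec_smul, dotProduct_add, dotProduct_smul, add_dotProduct,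
      smul_dotProduct, smul_eq_mul, hα, hβ, hβ', hγ]
    ring
  obtain ⟨p, q, hpq, hzero, hcross⟩ :
      ∃ p q : ℝ, p ^ 2 + q ^ 2 = 1 ∧ α * (p ^ 2 - q ^ 2) + 2 * β * p * q = 0 ∧
        ((α = 0 ∧ β = 0) ∨ -2 * p * q * α + (p ^ 2 - q ^ 2) * β ≠ 0) := by
    by_cases hα0 : α = 0
    · refine ⟨1, 0, by norm_num, by rw [hα0]; ring, ?_⟩
      by_cases hβ0 : β = 0
      · exact Or.inl ⟨hα0, hβ0⟩
      · right; rw [hα0]; intro h; apply hβ0; nlinarith [h]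
    · have hα2 : 0 < α ^ 2 := by positivity
      set r := Real.sqrt (α ^ 2 + β ^ 2) with hrdef
      have hr2 : r ^ 2 = α ^ 2 + β ^ 2 := Real.sq_sqrt (by positivity)
      have hrpos : 0 < r := Real.sqrt_pos.mpr (by positivity)
      have hrβ : β < r := by nlinarith [hα2, hr2, hrpos, sq_nonneg (β + r), sq_nonneg (β - r)]
      set n := Real.sqrt ((r - β) ^ 2 + α ^ 2) with hndef
      have hn2 : n ^ 2 = (r - β) ^ 2 + α ^ 2 := Real.sq_sqrt (by positivity)
      have hnpos : 0 < n := Real.sqrt_pos.mpr (by positivity)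
      have hn0 : n ≠ 0 := ne_of_gt hnpos
      refine ⟨(r - β) / n, α / n, ?_, ?_, Or.inr ?_⟩
      · have h1 : ((r - β) / n) ^ 2 + (α / n) ^ 2 = ((r - β) ^ 2 + α ^ 2) / n ^ 2 := by ring
        rw [h1, ← hn2, div_self (pow_ne_zero 2 hn0)]
      · have h1 : α * (((r - β) / n) ^ 2 - (α / n) ^ 2) + 2 * β * ((r - β) / n) * (α / n)
            = (α * ((r - β) ^ 2 - α ^ 2) + 2 * β * (r - β) * α) / n ^ 2 := by ring
        have h2 : α * ((r - β) ^ 2 - α ^ 2) + 2 * β * (r - β) * α = 0 := by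
          linear_combination α * hr2
        rw [h1, h2, zero_div]
      · have h1 : -2 * ((r - β) / n) * (α / n) * α + (((r - β) / n) ^ 2 - (α / n) ^ 2) * β
            = (-2 * (r - β) * α ^ 2 + ((r - β) ^ 2 - α ^ 2) * β) / n ^ 2 := by ring
        have h2 : -2 * (r - β) * α ^ 2 + ((r - β) ^ 2 - α ^ 2) * β = -2 * (r - β) * r ^ 2 := by
          linear_combination (2 * r - β) * hr2
        rw [h1, h2]
        have hneg : -2 * (r - β) * r ^ 2 / n ^ 2 < 0 := by
          apply div_neg_of_neg_of_pos
          · have hd : 0 < r - β := by linarith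
            nlinarith [hd, hrpos]
          · positivity
        exact ne_of_lt hneg
  refine ⟨p • e₁ + q • e₂, (-q) • e₁ + p • e₂, ?_, ?_, ?_, dote₀ p q, dote₀ (-q) p, ?_, ?_, ?_⟩
  · rw [dotw]; linear_combination hpq
  · rw [dotw]; linear_combination hpq
  · rw [dotw]; ring
  · rw [dotC]; linear_combination hzero
  · rw [dotC]; linear_combination -hzero
  · intro hz u hu
    have hcw : -2 * p * q * α + (p ^ 2 - q ^ 2) * β = 0 := by
      rw [← hz, dotC]; ring
    rcases hcross with ⟨hA, hB⟩ | hne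
    · have hCe₁ : C.mulVec e₁ = 0 := by
        rw [← hcomp (C.mulVec e₁), hCe₁0, hβ', hα, hA, hB]
        simp
      have hCe₂ : C.mulVec e₂ = 0 := by
        rw [← hcomp (C.mulVec e₂), hCe₂0, hβ, hγ, hA, hB]
        simp
      have hu' : (e₁ ⬝ᵥ u) • e₁ + (e₂ ⬝ᵥ u) • e₂ = u := by
        have h := hcomp u
        rw [hu] at h
        simpa using h
      rw [← hu', mulVec_add, mulVec_smul, mulVec_smul, hCe₁, hCe₂]
      simp
    · exact absurd hcw hne

lemma stmt12_norm_dot (x : Fin 3 → ℝ) (hx : 0 < x ⬝ᵥ x) :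
    ((Real.sqrt (x ⬝ᵥ x))⁻¹ • x) ⬝ᵥ ((Real.sqrt (x ⬝ᵥ x))⁻¹ • x) = 1 := by
  obtain ⟨d, hd⟩ : ∃ d : ℝ, x ⬝ᵥ x = d := ⟨_, rfl⟩
  rw [hd] at hx ⊢
  have h2 : Real.sqrt d * Real.sqrt d = d := Real.mul_self_sqrt hx.le
  have h0 : Real.sqrt d ≠ 0 := ne_of_gt (Real.sqrt_pos.mpr hx)
  rw [smul_dotProduct, dotProduct_smul, hd, smul_eq_mul, smul_eq_mul, ← h2]
  field_simp
  rw [Real.sqrt_sq (Real.sqrt_nonneg d)]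

lemma stmt12_dotpos (v : Fin 3 → ℝ) (hv : v ≠ 0) : 0 < v ⬝ᵥ v := by
  have h1 : 0 ≤ v ⬝ᵥ v := Finset.sum_nonneg fun i _ => mul_self_nonneg _
  rcases h1.lt_or_eq with h | h
  · exact h
  · exact absurd (dotProduct_self_eq_zero.mp h.symm) hv

/-- If the dissipative matrix `D = 2((Tr C)·I₃ − C)` is positive semidefinite and singular,
with `Dv = 0` for a nonzero `v`, then there are orthonormal vectors `w₁, w₂ ⊥ v` with
`w₁ᵀ C w₁ = w₂ᵀ C w₂ = 0`; and if moreover some `u ⊥ v` has `Cu ≠ 0`, the pair can be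
chosen with `w₁ᵀ C w₂ ≠ 0` (the conditions of Theorem 1 hold on the boundary of the
positivity cone). -/
theorem stmt_12 (C : Matrix (Fin 3) (Fin 3) ℝ) (hC : C.IsSymm)
    (hD : (2 • (C.trace • (1 : Matrix (Fin 3) (Fin 3) ℝ) - C)).PosSemidef)
    (v : Fin 3 → ℝ) (hv : v ≠ 0)
    (hker : (2 • (C.trace • (1 : Matrix (Fin 3) (Fin 3) ℝ) - C)).mulVec v = 0) :
    (∃ w₁ w₂ : Fin 3 → ℝ, w₁ ⬝ᵥ w₁ = 1 ∧ w₂ ⬝ᵥ w₂ = 1 ∧ w₁ ⬝ᵥ w₂ = 0 ∧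
      v ⬝ᵥ w₁ = 0 ∧ v ⬝ᵥ w₂ = 0 ∧
      w₁ ⬝ᵥ C.mulVec w₁ = 0 ∧ w₂ ⬝ᵥ C.mulVec w₂ = 0) ∧
    ((∃ u : Fin 3 → ℝ, v ⬝ᵥ u = 0 ∧ C.mulVec u ≠ 0) →
      ∃ w₁ w₂ : Fin 3 → ℝ, w₁ ⬝ᵥ w₁ = 1 ∧ w₂ ⬝ᵥ w₂ = 1 ∧ w₁ ⬝ᵥ w₂ = 0 ∧
        v ⬝ᵥ w₁ = 0 ∧ v ⬝ᵥ w₂ = 0 ∧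
        w₁ ⬝ᵥ C.mulVec w₁ = 0 ∧ w₂ ⬝ᵥ C.mulVec w₂ = 0 ∧
        w₁ ⬝ᵥ C.mulVec w₂ ≠ 0) := by
  -- `C v = (tr C) v`
  have hCv : C.mulVec v = C.trace • v := by
    rw [two_smul, add_mulVec] at hker
    have h2 : (2:ℝ) • ((C.trace • (1 : Matrix (Fin 3) (Fin 3) ℝ) - C) *ᵥ v) = 0 := by
      rw [two_smul]; exact hker
    have h := (smul_eq_zero.mp h2).resolve_left (by norm_num)
    rw [sub_mulVec, Matrix.smul_mulVec, one_mulVec] at h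
    exact (sub_eq_zero.mp h).symm
  -- normalize v
  have hvv : 0 < v ⬝ᵥ v := stmt12_dotpos v hv
  set nv := Real.sqrt (v ⬝ᵥ v) with hnvdef
  have hnvpos : 0 < nv := Real.sqrt_pos.mpr hvv
  have hnv0 : nv⁻¹ ≠ 0 := inv_ne_zero (ne_of_gt hnvpos)
  set e₀ : Fin 3 → ℝ := nv⁻¹ • v with he₀def
  have h00 : e₀ ⬝ᵥ e₀ = 1 := stmt12_norm_dot v hvv
  have he₀ : C.mulVec e₀ = C.trace • e₀ := by
    rw [he₀def, mulVec_smul, hCv, smul_comm]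
  have he₀v : ∀ w : Fin 3 → ℝ, e₀ ⬝ᵥ w = nv⁻¹ * (v ⬝ᵥ w) := by
    intro w; rw [he₀def, smul_dotProduct, smul_eq_mul]
  -- orthonormal pair orthogonal to v
  obtain ⟨e₁, e₂, h11, h22, h12, hv1, hv2⟩ :
      ∃ f₁ f₂ : Fin 3 → ℝ, f₁ ⬝ᵥ f₁ = 1 ∧ f₂ ⬝ᵥ f₂ = 1 ∧ f₁ ⬝ᵥ f₂ = 0 ∧
        v ⬝ᵥ f₁ = 0 ∧ v ⬝ᵥ f₂ = 0 := by
    by_cases h012 : v 0 = 0 ∧ v 1 = 0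
    · exact ⟨![1, 0, 0], ![0, 1, 0],
        by simp [dotProduct, Fin.sum_univ_three],
        by simp [dotProduct, Fin.sum_univ_three],
        by simp [dotProduct, Fin.sum_univ_three],
        by simp [dotProduct, Fin.sum_univ_three, h012.1],
        by simp [dotProduct, Fin.sum_univ_three, h012.2]⟩
    · have hs : 0 < v 0 ^ 2 + v 1 ^ 2 := by
        rcases not_and_or.mp h012 with h | h <;> positivity
      set a : Fin 3 → ℝ := ![-(v 1), v 0, 0] with hadef
      set b : Fin 3 → ℝ := ![-(v 0 * v 2), -(v 1 * v 2), v 0 ^ 2 + v 1 ^ 2] with hbdef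
      have haa : a ⬝ᵥ a = v 0 ^ 2 + v 1 ^ 2 := by
        simp [hadef, dotProduct, Fin.sum_univ_three]; ring
      have hbb : b ⬝ᵥ b = (v 0 ^ 2 + v 1 ^ 2) * (v 2 ^ 2 + (v 0 ^ 2 + v 1 ^ 2)) := by
        simp [hbdef, dotProduct, Fin.sum_univ_three]; ring
      have hab : a ⬝ᵥ b = 0 := by
        simp [hadef, hbdef, dotProduct, Fin.sum_univ_three]; ring
      have hva : v ⬝ᵥ a = 0 := by
        simp [hadef, dotProduct, Fin.sum_univ_three]; ring
      have hvb : v ⬝ᵥ b = 0 := by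
        simp [hbdef, dotProduct, Fin.sum_univ_three]; ring
      have haapos : 0 < a ⬝ᵥ a := by rw [haa]; exact hs
      have hbbpos : 0 < b ⬝ᵥ b := by rw [hbb]; positivity
      refine ⟨(Real.sqrt (a ⬝ᵥ a))⁻¹ • a, (Real.sqrt (b ⬝ᵥ b))⁻¹ • b,
        stmt12_norm_dot a haapos, stmt12_norm_dot b hbbpos, ?_, ?_, ?_⟩
      · rw [smul_dotProduct, dotProduct_smul, hab]; simp
      · rw [dotProduct_smul, hva]; simp
      · rw [dotProduct_smul, hvb]; simp
  have h01 : e₀ ⬝ᵥ e₁ = 0 := by rw [he₀v, hv1, mul_zero]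
  have h02 : e₀ ⬝ᵥ e₂ = 0 := by rw [he₀v, hv2, mul_zero]
  obtain ⟨w₁, w₂, hw1, hw2, hw12, hew1, hew2, hq1, hq2, hkill⟩ :=
    stmt12_inner C hC e₀ e₁ e₂ h00 h11 h22 h01 h02 h12 he₀
  have hvw : ∀ w : Fin 3 → ℝ, e₀ ⬝ᵥ w = 0 → v ⬝ᵥ w = 0 := by
    intro w hw
    rw [he₀v] at hw
    exact (mul_eq_zero.mp hw).resolve_left hnv0
  refine ⟨⟨w₁, w₂, hw1, hw2, hw12, hvw w₁ hew1, hvw w₂ hew2, hq1, hq2⟩, ?_⟩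
  rintro ⟨u, hu1, hu2⟩
  refine ⟨w₁, w₂, hw1, hw2, hw12, hvw w₁ hew1, hvw w₂ hew2, hq1, hq2, ?_⟩
  intro hz
  exact hu2 (hkill hz u (by rw [he₀v, hu1, mul_zero]))
end

section
/- Let h₃ and c be nonzero real numbers with c > 0, and set H = 2h₃(E₁₂ − E₂₁) and D = 2c·(E₁₁ + E₂₂ + 2E₃₃) (the completely positive dissipator with c₁₁ = c₂₂ = c, c₁₂ = c₁₃ = c₂₃ = 0). Then the Lie subalgebra of gl(3,ℝ) generated by {D, H + D} equals the 2-dimensional span of {E₂₁ − E₁₂, E₁₁ + E₂₂ + 2E₃₃}; in particular the corresponding control system is not accessible. -/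
open Matrix

attribute [local instance 100] LieRing.ofAssociativeRing

/-- `E i j` is the 3×3 real matrix with a single 1 in position `(i,j)`. -/
noncomputable def E (i j : Fin 3) : Matrix (Fin 3) (Fin 3) ℝ :=
  Matrix.single i j 1

noncomputable def Amat : Matrix (Fin 3) (Fin 3) ℝ := E 1 0 - E 0 1
noncomputable def Bmat : Matrix (Fin 3) (Fin 3) ℝ := E 0 0 + E 1 1 + 2 • E 2 2

lemma bracketAB : ⁅Amat, Bmat⁆ = 0 := by
  show Amat * Bmat - Bmat * Amat = 0
  ext i j
  fin_cases i <;> fin_cases j <;>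
    simp [Amat, Bmat, E, Matrix.mul_apply, Fin.sum_univ_three,
      Matrix.single]

lemma bracketBA : ⁅Bmat, Amat⁆ = 0 := by
  rw [← lie_skew, bracketAB, neg_zero]

lemma indep : LinearIndependent ℝ ![Amat, Bmat] := by
  rw [LinearIndependent.pair_iff]
  intro s t h
  have h1 := congrFun (congrFun h 1) 0
  have h2 := congrFun (congrFun h 0) 0
  simp [Amat, Bmat, E, Matrix.single] at h1 h2
  exact ⟨h1, h2⟩

noncomputable def L : LieSubalgebra ℝ (Matrix (Fin 3) (Fin 3) ℝ) where
  toSubmodule := Submodule.span ℝ {Amat, Bmat}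
  lie_mem' := by
    intro x y hx hy
    show _ ∈ Submodule.span ℝ {Amat, Bmat}
    have hx' : x ∈ Submodule.span ℝ {Amat, Bmat} := hx
    have hy' : y ∈ Submodule.span ℝ {Amat, Bmat} := hy
    obtain ⟨a, b, rfl⟩ := Submodule.mem_span_pair.mp hx'
    obtain ⟨a', b', rfl⟩ := Submodule.mem_span_pair.mp hy'
    have : ⁅a • Amat + b • Bmat, a' • Amat + b' • Bmat⁆ = 0 := by
      simp [lie_add, add_lie, lie_smul, smul_lie, bracketAB, bracketBA]
    rw [this]
    exact Submodule.zero_mem _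

/-- With `H = 2h₃(E₁₂ − E₂₁)` and the completely positive dissipator
`D = 2c(E₁₁ + E₂₂ + 2E₃₃)` (`c₁₁ = c₂₂ = c > 0`), the Lie algebra generated by
`{D, H + D}` is the 2-dimensional span of `{E₂₁ − E₁₂, E₁₁ + E₂₂ + 2E₃₃}`;
in particular the control system is not accessible. -/
theorem stmt_13 (h₃ c : ℝ) (hh : h₃ ≠ 0) (hc : c > 0) :
    let H : Matrix (Fin 3) (Fin 3) ℝ := (2 * h₃) • (E 0 1 - E 1 0)
    let D : Matrix (Fin 3) (Fin 3) ℝ := (2 * c) • (E 0 0 + E 1 1 + 2 • E 2 2)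
    (LieSubalgebra.lieSpan ℝ (Matrix (Fin 3) (Fin 3) ℝ) {D, H + D} :
        Set (Matrix (Fin 3) (Fin 3) ℝ)) =
      (Submodule.span ℝ {E 1 0 - E 0 1, E 0 0 + E 1 1 + 2 • E 2 2} :
        Submodule ℝ (Matrix (Fin 3) (Fin 3) ℝ)) ∧
    Module.finrank ℝ
      (Submodule.span ℝ ({E 1 0 - E 0 1, E 0 0 + E 1 1 + 2 • E 2 2} :
        Set (Matrix (Fin 3) (Fin 3) ℝ))) = 2 := by
  intro H D
  have hAB : ({E 1 0 - E 0 1, E 0 0 + E 1 1 + 2 • E 2 2} :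
      Set (Matrix (Fin 3) (Fin 3) ℝ)) = {Amat, Bmat} := rfl
  have hD : D = (2 * c) • Bmat := rfl
  have hH : H = (-(2 * h₃)) • Amat := by
    simp [H, Amat, smul_sub]
    module
  constructor
  · rw [hAB]
    have hle : LieSubalgebra.lieSpan ℝ (Matrix (Fin 3) (Fin 3) ℝ) {D, H + D} ≤ L := by
      rw [LieSubalgebra.lieSpan_le]
      intro x hx
      rcases hx with rfl | rfl
      · show D ∈ Submodule.span ℝ {Amat, Bmat}
        rw [Submodule.mem_span_pair]
        exact ⟨0, 2 * c, by rw [hD]; module⟩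
      · show H + D ∈ Submodule.span ℝ {Amat, Bmat}
        rw [Submodule.mem_span_pair]
        exact ⟨-(2 * h₃), 2 * c, by rw [hD, hH]⟩
    have hge : (Submodule.span ℝ {Amat, Bmat} : Set (Matrix (Fin 3) (Fin 3) ℝ)) ⊆
        LieSubalgebra.lieSpan ℝ (Matrix (Fin 3) (Fin 3) ℝ) {D, H + D} := by
      have hDmem : D ∈ LieSubalgebra.lieSpan ℝ (Matrix (Fin 3) (Fin 3) ℝ) {D, H + D} :=
        LieSubalgebra.subset_lieSpan (by left; rfl)
      have hHDmem : H + D ∈ LieSubalgebra.lieSpan ℝ (Matrix (Fin 3) (Fin 3) ℝ) {D, H + D} :=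
        LieSubalgebra.subset_lieSpan (by right; rfl)
      have hHmem : H ∈ LieSubalgebra.lieSpan ℝ (Matrix (Fin 3) (Fin 3) ℝ) {D, H + D} := by
        have := (LieSubalgebra.lieSpan ℝ _ {D, H + D}).sub_mem hHDmem hDmem
        simpa using this
      have hAmem : Amat ∈ LieSubalgebra.lieSpan ℝ (Matrix (Fin 3) (Fin 3) ℝ) {D, H + D} := by
        have := (LieSubalgebra.lieSpan ℝ _ {D, H + D}).smul_mem (-(1 / (2 * h₃))) hHmem
        have heq : (-(1 / (2 * h₃))) • H = Amat := by
          rw [hH, smul_smul]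
          field_simp
          exact one_smul _ _
        rwa [heq] at this
      have hBmem : Bmat ∈ LieSubalgebra.lieSpan ℝ (Matrix (Fin 3) (Fin 3) ℝ) {D, H + D} := by
        have := (LieSubalgebra.lieSpan ℝ _ {D, H + D}).smul_mem (1 / (2 * c)) hDmem
        have heq : (1 / (2 * c)) • D = Bmat := by
          rw [hD, smul_smul]
          field_simp
          exact one_smul _ _
        rwa [heq] at this
      have : Submodule.span ℝ {Amat, Bmat} ≤
          (LieSubalgebra.lieSpan ℝ (Matrix (Fin 3) (Fin 3) ℝ) {D, H + D}).toSubmodule := by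
        rw [Submodule.span_le]
        intro x hx
        rcases hx with rfl | rfl
        · exact hAmem
        · exact hBmem
      exact this
    apply Set.Subset.antisymm
    · exact fun x hx => hle hx
    · exact hge
  · rw [hAB]
    have hset : ({Amat, Bmat} : Set (Matrix (Fin 3) (Fin 3) ℝ)) = Set.range ![Amat, Bmat] := by
      ext x
      simp [Fin.exists_fin_two, eq_comm]
      tauto
    rw [hset, finrank_span_eq_card indep]
    simp
end

section
/- Let h₃ ≠ 0 and let c₁₁, c₂₂ be nonnegative real numbers with c₁₁ ≠ c₂₂. Set H = 2h₃(E₁₂ − E₂₁) and D = 2(c₂₂E₁₁ + c₁₁E₂₂ + (c₁₁ + c₂₂)E₃₃) (the completely positive dissipator with c₁₂ = c₁₃ = c₂₃ = 0). Then the Lie subalgebra of gl(3,ℝ) generated by {D, H + D} equals the 4-dimensional span of {E₁₂, E₂₁, E₁₁ − E₂₂, E₂₂ + E₃₃}; in particular the corresponding control system is not accessible. -/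
open Matrix

attribute [local instance 100] LieRing.ofAssociativeRing

def Pm (M : Matrix (Fin 3) (Fin 3) ℝ) : Prop :=
  M 0 2 = 0 ∧ M 1 2 = 0 ∧ M 2 0 = 0 ∧ M 2 1 = 0 ∧ M 2 2 = M 0 0 + M 1 1

noncomputable def Vspan : Submodule ℝ (Matrix (Fin 3) (Fin 3) ℝ) :=
  Submodule.span ℝ {E 0 1, E 1 0, E 0 0 - E 1 1, E 1 1 + E 2 2}

lemma mem_V_iff (M : Matrix (Fin 3) (Fin 3) ℝ) : M ∈ Vspan ↔ Pm M := by
  constructor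
  · intro hM
    induction hM using Submodule.span_induction with
    | mem x hx =>
      rcases hx with rfl | rfl | rfl | rfl <;>
        refine ⟨?_, ?_, ?_, ?_, ?_⟩ <;>
          norm_num [E, Matrix.single, Pm, Fin.ext_iff]
    | zero => refine ⟨rfl, rfl, rfl, rfl, by norm_num⟩
    | add x y hx hy ihx ihy =>
      obtain ⟨a1,a2,a3,a4,a5⟩ := ihx; obtain ⟨b1,b2,b3,b4,b5⟩ := ihy
      refine ⟨?_,?_,?_,?_,?_⟩ <;> simp [a1,a2,a3,a4,a5,b1,b2,b3,b4,b5] <;> ring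
    | smul t x hx ihx =>
      obtain ⟨a1,a2,a3,a4,a5⟩ := ihx
      refine ⟨?_,?_,?_,?_,?_⟩ <;> simp [a1,a2,a3,a4,a5] <;> ring
  · rintro ⟨a1,a2,a3,a4,a5⟩
    have : M = M 0 1 • E 0 1 + M 1 0 • E 1 0 + M 0 0 • (E 0 0 - E 1 1)
        + (M 0 0 + M 1 1) • (E 1 1 + E 2 2) := by
      ext i j
      fin_cases i <;> fin_cases j <;>
        simp [E, Matrix.single, a1, a2, a3, a4, a5]
    rw [this]
    refine Submodule.add_mem _ (Submodule.add_mem _ (Submodule.add_mem _ ?_ ?_) ?_) ?_ <;>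
      exact Submodule.smul_mem _ _ (Submodule.subset_span (by simp))

noncomputable def L4 : LieSubalgebra ℝ (Matrix (Fin 3) (Fin 3) ℝ) where
  carrier := Vspan
  add_mem' := fun hx hy => Submodule.add_mem _ hx hy
  zero_mem' := Submodule.zero_mem _
  smul_mem' := fun t _ hx => Submodule.smul_mem _ t hx
  lie_mem' := by
    intro x y hx hy
    rw [SetLike.mem_coe, mem_V_iff] at *
    obtain ⟨a1,a2,a3,a4,a5⟩ := hx
    obtain ⟨b1,b2,b3,b4,b5⟩ := hy
    refine ⟨?_,?_,?_,?_,?_⟩ <;>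
      simp [Ring.lie_def, Matrix.mul_apply, Fin.sum_univ_three, Matrix.sub_apply,
        a1,a2,a3,a4,a5,b1,b2,b3,b4,b5] <;> ring

lemma V_eq_L4 : (L4 : Set (Matrix (Fin 3) (Fin 3) ℝ)) = (Vspan : Set (Matrix (Fin 3) (Fin 3) ℝ)) := rfl

noncomputable def fgen : Fin 4 → Matrix (Fin 3) (Fin 3) ℝ :=
  ![E 0 1, E 1 0, E 0 0 - E 1 1, E 1 1 + E 2 2]

lemma fgen_li : LinearIndependent ℝ fgen := by
  rw [Fintype.linearIndependent_iff]
  intro g hg i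
  rw [Fin.sum_univ_four] at hg
  have e01 := congrFun (congrFun hg 0) 1
  have e10 := congrFun (congrFun hg 1) 0
  have e00 := congrFun (congrFun hg 0) 0
  have e22 := congrFun (congrFun hg 2) 2
  simp [fgen, E, Matrix.single, Fin.ext_iff] at e01 e10 e00 e22
  fin_cases i <;> simp_all

lemma range_fgen :
    Set.range fgen = ({E 0 1, E 1 0, E 0 0 - E 1 1, E 1 1 + E 2 2} :
      Set (Matrix (Fin 3) (Fin 3) ℝ)) := by
  ext x
  constructor
  · rintro ⟨i, rfl⟩
    fin_cases i <;> simp [fgen]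
  · rintro (rfl | rfl | rfl | rfl)
    exacts [⟨0, rfl⟩, ⟨1, rfl⟩, ⟨2, rfl⟩, ⟨3, rfl⟩]

lemma finrank_V : Module.finrank ℝ
    (Submodule.span ℝ ({E 0 1, E 1 0, E 0 0 - E 1 1, E 1 1 + E 2 2} :
      Set (Matrix (Fin 3) (Fin 3) ℝ))) = 4 := by
  rw [← range_fgen, finrank_span_eq_card fgen_li]
  simp

lemma brkt_E01_E10 : ⁅E 0 1, E 1 0⁆ = E 0 0 - E 1 1 := by
  ext i j
  fin_cases i <;> fin_cases j <;>
    simp [E, Ring.lie_def, Matrix.mul_apply, Fin.sum_univ_three, Matrix.single]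

lemma keybrkt (h₃ c₁₁ c₂₂ : ℝ) :
    ⁅(2 • (c₂₂ • E 0 0 + c₁₁ • E 1 1 + (c₁₁ + c₂₂) • E 2 2) : Matrix (Fin 3) (Fin 3) ℝ),
      (2 * h₃) • (E 0 1 - E 1 0)⁆ = (4 * h₃ * (c₂₂ - c₁₁)) • (E 0 1 + E 1 0) := by
  ext i j
  fin_cases i <;> fin_cases j <;>
    simp [Ring.lie_def, Matrix.mul_apply, Fin.sum_univ_three, E,
      Matrix.single, Fin.ext_iff] <;> ring

lemma keyD (c₁₁ c₂₂ : ℝ) :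
    (2 • (c₂₂ • E 0 0 + c₁₁ • E 1 1 + (c₁₁ + c₂₂) • E 2 2) : Matrix (Fin 3) (Fin 3) ℝ)
      - (2 * c₂₂) • (E 0 0 - E 1 1) = (2 * (c₁₁ + c₂₂)) • (E 1 1 + E 2 2) := by
  ext i j
  fin_cases i <;> fin_cases j <;>
    simp [E, Matrix.single, Fin.ext_iff] <;> ring

/-- With `H = 2h₃(E₁₂ − E₂₁)` and the completely positive dissipator
`D = 2(c₂₂E₁₁ + c₁₁E₂₂ + (c₁₁+c₂₂)E₃₃)` with `c₁₁ ≠ c₂₂`, the Lie algebra generated by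
`{D, H + D}` is the 4-dimensional span of `{E₁₂, E₂₁, E₁₁ − E₂₂, E₂₂ + E₃₃}`;
in particular the control system is not accessible. -/
theorem stmt_14 (h₃ c₁₁ c₂₂ : ℝ) (hh : h₃ ≠ 0)
    (h11 : 0 ≤ c₁₁) (h22 : 0 ≤ c₂₂) (hne : c₁₁ ≠ c₂₂) :
    let H : Matrix (Fin 3) (Fin 3) ℝ := (2 * h₃) • (E 0 1 - E 1 0)
    let D : Matrix (Fin 3) (Fin 3) ℝ :=
      2 • (c₂₂ • E 0 0 + c₁₁ • E 1 1 + (c₁₁ + c₂₂) • E 2 2)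
    (LieSubalgebra.lieSpan ℝ (Matrix (Fin 3) (Fin 3) ℝ) {D, H + D} :
        Set (Matrix (Fin 3) (Fin 3) ℝ)) =
      (Submodule.span ℝ {E 0 1, E 1 0, E 0 0 - E 1 1, E 1 1 + E 2 2} :
        Submodule ℝ (Matrix (Fin 3) (Fin 3) ℝ)) ∧
    Module.finrank ℝ
      (Submodule.span ℝ ({E 0 1, E 1 0, E 0 0 - E 1 1, E 1 1 + E 2 2} :
        Set (Matrix (Fin 3) (Fin 3) ℝ))) = 4 := by
  intro H D
  have hHdef : H = (2 * h₃) • (E 0 1 - E 1 0) := rfl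
  have hDdef : D = 2 • (c₂₂ • E 0 0 + c₁₁ • E 1 1 + (c₁₁ + c₂₂) • E 2 2) := rfl
  set K := LieSubalgebra.lieSpan ℝ (Matrix (Fin 3) (Fin 3) ℝ) {D, H + D} with hK
  refine ⟨Set.Subset.antisymm ?_ ?_, finrank_V⟩
  · -- lieSpan ⊆ Vspan
    have h1 : K ≤ L4 := by
      apply LieSubalgebra.lieSpan_le.mpr
      rintro x (rfl | rfl)
      · exact (mem_V_iff _).mpr (by
          refine ⟨?_,?_,?_,?_,?_⟩ <;>
            simp [hDdef, E, Matrix.single, Fin.ext_iff] <;> ring)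
      · exact (mem_V_iff _).mpr (by
          refine ⟨?_,?_,?_,?_,?_⟩ <;>
            simp [hDdef, hHdef, E, Matrix.single, Fin.ext_iff] <;> ring)
    exact h1
  · -- Vspan ⊆ lieSpan
    have hD : D ∈ K := LieSubalgebra.subset_lieSpan (by simp)
    have hHD : H + D ∈ K := LieSubalgebra.subset_lieSpan (by simp)
    have hH : H ∈ K := by
      have := sub_mem hHD hD; simpa using this
    have key : ⁅D, H⁆ = (4 * h₃ * (c₂₂ - c₁₁)) • (E 0 1 + E 1 0) := by
      rw [hDdef, hHdef]; exact keybrkt h₃ c₁₁ c₂₂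
    have hsc : (4 * h₃ * (c₂₂ - c₁₁)) ≠ 0 :=
      mul_ne_zero (mul_ne_zero (by norm_num) hh) (sub_ne_zero.mpr (Ne.symm hne))
    have hsum : E 0 1 + E 1 0 ∈ K := by
      have hmem : ⁅D, H⁆ ∈ K := K.lie_mem hD hH
      have heq : E 0 1 + E 1 0 = (4 * h₃ * (c₂₂ - c₁₁))⁻¹ • ⁅D, H⁆ := by
        rw [key, smul_smul, inv_mul_cancel₀ hsc, one_smul]
      rw [heq]; exact K.smul_mem _ hmem
    have hdiff : E 0 1 - E 1 0 ∈ K := by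
      have heq : E 0 1 - E 1 0 = (2 * h₃)⁻¹ • H := by
        rw [hHdef, smul_smul, inv_mul_cancel₀ (mul_ne_zero two_ne_zero hh), one_smul]
      rw [heq]; exact K.smul_mem _ hH
    have hE01 : E 0 1 ∈ K := by
      have heq : E 0 1 = (2:ℝ)⁻¹ • ((E 0 1 + E 1 0) + (E 0 1 - E 1 0)) := by module
      rw [heq]; exact K.smul_mem _ (add_mem hsum hdiff)
    have hE10 : E 1 0 ∈ K := by
      have heq : E 1 0 = (2:ℝ)⁻¹ • ((E 0 1 + E 1 0) - (E 0 1 - E 1 0)) := by module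
      rw [heq]; exact K.smul_mem _ (sub_mem hsum hdiff)
    have hdiag1 : E 0 0 - E 1 1 ∈ K := by
      rw [← brkt_E01_E10]; exact K.lie_mem hE01 hE10
    have hcsum : c₁₁ + c₂₂ ≠ 0 := by
      intro h
      have h1 : c₁₁ = 0 := le_antisymm (by linarith) h11
      have h2 : c₂₂ = 0 := by linarith
      exact hne (h1.trans h2.symm)
    have hdiag2 : E 1 1 + E 2 2 ∈ K := by
      have hid : D - (2 * c₂₂) • (E 0 0 - E 1 1) = (2 * (c₁₁ + c₂₂)) • (E 1 1 + E 2 2) := by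
        rw [hDdef]; exact keyD c₁₁ c₂₂
      have heq : E 1 1 + E 2 2 = (2 * (c₁₁ + c₂₂))⁻¹ • (D - (2 * c₂₂) • (E 0 0 - E 1 1)) := by
        rw [hid, smul_smul, inv_mul_cancel₀ (mul_ne_zero two_ne_zero hcsum), one_smul]
      rw [heq]
      exact K.smul_mem _ (sub_mem hD (K.smul_mem _ hdiag1))
    intro x hx
    have hx' : x ∈ Submodule.span ℝ
        ({E 0 1, E 1 0, E 0 0 - E 1 1, E 1 1 + E 2 2} : Set (Matrix (Fin 3) (Fin 3) ℝ)) := hx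
    refine Submodule.span_le.mpr ?_ hx'
    rintro y hy
    simp only [Set.mem_insert_iff, Set.mem_singleton_iff] at hy
    rcases hy with rfl | rfl | rfl | rfl
    exacts [hE01, hE10, hdiag1, hdiag2]
end

section
/- Let h₁ be any real number, let c₁₁, c₂₂, c₂₃ be any real numbers, set H = 2h₁(E₂₃ − E₃₂) and D = 2·[[c₂₂, 0, 0],[0, c₁₁, −c₂₃],[0, −c₂₃, c₁₁ + c₂₂]]. Then the Lie subalgebra of gl(3,ℝ) generated by {D, H + D} is contained in the 5-dimensional Lie subalgebra spanned by {E₁₁, E₂₂, E₃₃, E₂₃, E₃₂}; in particular it equals neither gl(3,ℝ) nor sl(3,ℝ), so the corresponding control system is not accessible for either positive or completely positive dissipation. -/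
open Matrix

attribute [local instance 100] LieRing.ofAssociativeRing

/-- Matrices with zero entries at `(0,1), (0,2), (1,0), (2,0)`. -/
def Zset : Submodule ℝ (Matrix (Fin 3) (Fin 3) ℝ) where
  carrier := {A | A 0 1 = 0 ∧ A 0 2 = 0 ∧ A 1 0 = 0 ∧ A 2 0 = 0}
  add_mem' := by
    rintro a b ⟨h1, h2, h3, h4⟩ ⟨g1, g2, g3, g4⟩
    simp_all [Matrix.add_apply]
  zero_mem' := by simp
  smul_mem' := by
    rintro c a ⟨h1, h2, h3, h4⟩
    simp_all [Matrix.smul_apply]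

/-- `Zset` as a Lie subalgebra. -/
def ZLie : LieSubalgebra ℝ (Matrix (Fin 3) (Fin 3) ℝ) :=
  { Zset with
    lie_mem' := by
      rintro a b ⟨h1, h2, h3, h4⟩ ⟨g1, g2, g3, g4⟩
      refine ⟨?_, ?_, ?_, ?_⟩ <;>
        simp [Ring.lie_def, Matrix.sub_apply, Matrix.mul_apply, Fin.sum_univ_three,
          h1, h2, h3, h4, g1, g2, g3, g4] }

lemma Zset_le_span :
    Zset ≤ Submodule.span ℝ {E 0 0, E 1 1, E 2 2, E 1 2, E 2 1} := by
  rintro A ⟨h1, h2, h3, h4⟩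
  have : A = A 0 0 • E 0 0 + A 1 1 • E 1 1 + A 2 2 • E 2 2 + A 1 2 • E 1 2 + A 2 1 • E 2 1 := by
    funext i j
    fin_cases i <;> fin_cases j <;>
      simp [E, Matrix.single, Matrix.add_apply, Matrix.smul_apply, h1, h2, h3, h4]
  rw [this]
  refine Submodule.add_mem _ (Submodule.add_mem _ (Submodule.add_mem _ (Submodule.add_mem _
    ?_ ?_) ?_) ?_) ?_ <;>
    exact Submodule.smul_mem _ _ (Submodule.subset_span (by simp))

/-- With `H = 2h₁(E₂₃ − E₃₂)` and `D = 2[[c₂₂,0,0],[0,c₁₁,−c₂₃],[0,−c₂₃,c₁₁+c₂₂]]`, the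
Lie algebra generated by `{D, H + D}` is contained in the 5-dimensional Lie subalgebra
spanned by `{E₁₁, E₂₂, E₃₃, E₂₃, E₃₂}`; in particular it is neither `gl(3,ℝ)` nor
`sl(3,ℝ)`, so the control system is not accessible, for positive as well as for
completely positive dissipation. -/
theorem stmt_16 (h₁ c₁₁ c₂₂ c₂₃ : ℝ) :
    let H : Matrix (Fin 3) (Fin 3) ℝ := (2 * h₁) • (E 1 2 - E 2 1)
    let D : Matrix (Fin 3) (Fin 3) ℝ :=
      2 • !![c₂₂, 0, 0; 0, c₁₁, -c₂₃; 0, -c₂₃, c₁₁ + c₂₂]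
    (LieSubalgebra.lieSpan ℝ (Matrix (Fin 3) (Fin 3) ℝ) {D, H + D} :
        Set (Matrix (Fin 3) (Fin 3) ℝ)) ⊆
      (Submodule.span ℝ {E 0 0, E 1 1, E 2 2, E 1 2, E 2 1} :
        Submodule ℝ (Matrix (Fin 3) (Fin 3) ℝ)) ∧
    LieSubalgebra.lieSpan ℝ (Matrix (Fin 3) (Fin 3) ℝ) {D, H + D} ≠ ⊤ ∧
    (LieSubalgebra.lieSpan ℝ (Matrix (Fin 3) (Fin 3) ℝ) {D, H + D} :
        Set (Matrix (Fin 3) (Fin 3) ℝ)) ≠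
      {A : Matrix (Fin 3) (Fin 3) ℝ | A.trace = 0} := by
  intro H D
  have hD : D ∈ ZLie := by
    refine ⟨?_, ?_, ?_, ?_⟩ <;>
      simp [D, Matrix.smul_apply, Matrix.vecHead, Matrix.vecTail]
  have hHD : H + D ∈ ZLie := by
    obtain ⟨d1, d2, d3, d4⟩ := hD
    refine ⟨?_, ?_, ?_, ?_⟩ <;>
      simp_all [H, E, Matrix.add_apply, Matrix.smul_apply, Matrix.sub_apply,
        Matrix.single]
  have hle : LieSubalgebra.lieSpan ℝ (Matrix (Fin 3) (Fin 3) ℝ) {D, H + D} ≤ ZLie := by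
    apply LieSubalgebra.lieSpan_le.mpr
    rintro x (rfl | rfl)
    · exact hD
    · exact hHD
  have hE01 : E 0 1 ∉ ZLie := by
    rintro ⟨h1, -⟩
    simp [E, Matrix.single] at h1
  refine ⟨?_, ?_, ?_⟩
  · intro x hx
    exact Zset_le_span (hle hx)
  · intro h
    exact hE01 (hle (h ▸ LieSubalgebra.mem_top (E 0 1)))
  · intro h
    have : E 0 1 ∈ (LieSubalgebra.lieSpan ℝ (Matrix (Fin 3) (Fin 3) ℝ) {D, H + D} :
        Set (Matrix (Fin 3) (Fin 3) ℝ)) := by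
      rw [h]
      simp [Set.mem_setOf_eq, E, Matrix.trace, Matrix.diag, Matrix.single,
        Fin.sum_univ_three]
    exact hE01 (hle this)
end

section
/- Let B₃ ≠ 0 and c₁₃ ≠ 0 be real numbers and let c₁₁, c₃₃ ≥ 0 satisfy c₁₁c₃₃ ≥ c₁₃² (so the coefficient matrix C = [[c₁₁,0,c₁₃],[0,0,0],[c₁₃,0,c₃₃]] is positive semidefinite and the dynamics is completely positive). Set H = 2B₃(E₁₂ − E₂₁) and D = 2·[[c₃₃, 0, −c₁₃],[0, c₁₁ + c₃₃, 0],[−c₁₃, 0, c₁₁]]. Then the Lie subalgebra of gl(3,ℝ) generated by {D, H + D} equals all of gl(3,ℝ); in particular the spin in a stochastic magnetic field with white-noise correlations W₁₁δ(t), W₁₃δ(t) is accessible even under the constraint of complete positivity. -/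
open Matrix

attribute [local instance 100] LieRing.ofAssociativeRing

lemma E_00 : E 0 0 = !![1,0,0;0,0,0;0,0,0] := by
  ext i j; fin_cases i <;> fin_cases j <;>
    simp [E, Matrix.single, Matrix.vecHead, Matrix.vecTail]
lemma E_01 : E 0 1 = !![0,1,0;0,0,0;0,0,0] := by
  ext i j; fin_cases i <;> fin_cases j <;>
    simp [E, Matrix.single, Matrix.vecHead, Matrix.vecTail]
lemma E_02 : E 0 2 = !![0,0,1;0,0,0;0,0,0] := by
  ext i j; fin_cases i <;> fin_cases j <;>
    simp [E, Matrix.single, Matrix.vecHead, Matrix.vecTail]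
lemma E_10 : E 1 0 = !![0,0,0;1,0,0;0,0,0] := by
  ext i j; fin_cases i <;> fin_cases j <;>
    simp [E, Matrix.single, Matrix.vecHead, Matrix.vecTail]
lemma E_11 : E 1 1 = !![0,0,0;0,1,0;0,0,0] := by
  ext i j; fin_cases i <;> fin_cases j <;>
    simp [E, Matrix.single, Matrix.vecHead, Matrix.vecTail]
lemma E_12 : E 1 2 = !![0,0,0;0,0,1;0,0,0] := by
  ext i j; fin_cases i <;> fin_cases j <;>
    simp [E, Matrix.single, Matrix.vecHead, Matrix.vecTail]
lemma E_20 : E 2 0 = !![0,0,0;0,0,0;1,0,0] := by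
  ext i j; fin_cases i <;> fin_cases j <;>
    simp [E, Matrix.single, Matrix.vecHead, Matrix.vecTail]
lemma E_21 : E 2 1 = !![0,0,0;0,0,0;0,1,0] := by
  ext i j; fin_cases i <;> fin_cases j <;>
    simp [E, Matrix.single, Matrix.vecHead, Matrix.vecTail]
lemma E_22 : E 2 2 = !![0,0,0;0,0,0;0,0,1] := by
  ext i j; fin_cases i <;> fin_cases j <;>
    simp [E, Matrix.single, Matrix.vecHead, Matrix.vecTail]

set_option maxHeartbeats 3200000 in
/-- For the spin in a stochastic magnetic field with white-noise correlations:
with `B₃ ≠ 0`, `c₁₃ ≠ 0`, `c₁₁, c₃₃ ≥ 0`, `c₁₁c₃₃ ≥ c₁₃²` (so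
`C = [[c₁₁,0,c₁₃],[0,0,0],[c₁₃,0,c₃₃]]` is positive semidefinite and the dynamics is
completely positive), `H = 2B₃(E₁₂ − E₂₁)` and
`D = 2[[c₃₃,0,−c₁₃],[0,c₁₁+c₃₃,0],[−c₁₃,0,c₁₁]]`, the Lie algebra generated by
`{D, H + D}` is all of `gl(3,ℝ)`: the system is accessible even under complete
positivity. -/
theorem stmt_17 (B₃ c₁₁ c₃₃ c₁₃ : ℝ) (hB : B₃ ≠ 0) (h13 : c₁₃ ≠ 0)
    (h11 : 0 ≤ c₁₁) (h33 : 0 ≤ c₃₃) (hdet : c₁₃ ^ 2 ≤ c₁₁ * c₃₃) :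
    let H : Matrix (Fin 3) (Fin 3) ℝ := (2 * B₃) • (E 0 1 - E 1 0)
    let D : Matrix (Fin 3) (Fin 3) ℝ :=
      2 • !![c₃₃, 0, -c₁₃; 0, c₁₁ + c₃₃, 0; -c₁₃, 0, c₁₁]
    LieSubalgebra.lieSpan ℝ (Matrix (Fin 3) (Fin 3) ℝ) {D, H + D} = ⊤ := by
  intro H D
  have hHdef : H = (2 * B₃) • (E 0 1 - E 1 0) := rfl
  have hDdef : D = 2 • !![c₃₃, 0, -c₁₃; 0, c₁₁ + c₃₃, 0; -c₁₃, 0, c₁₁] := rfl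
  have hβ : (2 * B₃) ≠ 0 := mul_ne_zero two_ne_zero hB
  have hk2 : 0 < c₁₃ ^ 2 :=
    lt_of_le_of_ne (sq_nonneg _) (Ne.symm (pow_ne_zero 2 h13))
  have hac : 0 < c₁₁ * c₃₃ := lt_of_lt_of_le hk2 hdet
  have ha : 0 < c₁₁ := by nlinarith
  have hc : 0 < c₃₃ := by nlinarith
  have ha' : c₁₁ ≠ 0 := ne_of_gt ha
  have hsum : 2 * c₁₁ + 2 * c₃₃ ≠ 0 := by positivity
  set L := LieSubalgebra.lieSpan ℝ (Matrix (Fin 3) (Fin 3) ℝ) {D, H + D} with hL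
  have hD : D ∈ L := LieSubalgebra.subset_lieSpan (Set.mem_insert _ _)
  have hHD : H + D ∈ L :=
    LieSubalgebra.subset_lieSpan (Set.mem_insert_of_mem _ rfl)
  have hH : H ∈ L := by
    have := L.sub_mem hHD hD
    simpa using this
  -- step-by-step brackets
  have eM1 : ⁅H, D⁆ =
      !![0, 4*B₃*c₁₁, 0; 4*B₃*c₁₁, 0, 4*B₃*c₁₃; 0, 4*B₃*c₁₃, 0] := by
    rw [hHdef, hDdef, E_01, E_10]
    ext i j
    fin_cases i <;> fin_cases j <;>
      simp [Ring.lie_def, Matrix.mul_apply, Fin.sum_univ_three,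
        Matrix.vecHead, Matrix.vecTail] <;> ring
  have hM1 : !![0, 4*B₃*c₁₁, 0; 4*B₃*c₁₁, 0, 4*B₃*c₁₃; 0, 4*B₃*c₁₃, 0] ∈ L := by
    rw [← eM1]; exact L.lie_mem hH hD
  have hM2 : !![16*B₃^2*c₁₁, 0, 8*B₃^2*c₁₃; 0, -(16*B₃^2*c₁₁), 0;
      8*B₃^2*c₁₃, 0, 0] ∈ L := by
    have e : ⁅H, !![0, 4*B₃*c₁₁, 0; 4*B₃*c₁₁, 0, 4*B₃*c₁₃; 0, 4*B₃*c₁₃, 0]⁆ =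
        !![16*B₃^2*c₁₁, 0, 8*B₃^2*c₁₃; 0, -(16*B₃^2*c₁₁), 0;
          8*B₃^2*c₁₃, 0, 0] := by
      rw [hHdef, E_01, E_10]
      ext i j
      fin_cases i <;> fin_cases j <;>
        simp [Ring.lie_def, Matrix.mul_apply, Fin.sum_univ_three,
          Matrix.vecHead, Matrix.vecTail] <;> ring
    rw [← e]; exact L.lie_mem hH hM1
  have hM3 : !![0, -(64*B₃^3*c₁₁), 0; -(64*B₃^3*c₁₁), 0, -(16*B₃^3*c₁₃);
      0, -(16*B₃^3*c₁₃), 0] ∈ L := by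
    have e : ⁅H, !![16*B₃^2*c₁₁, 0, 8*B₃^2*c₁₃; 0, -(16*B₃^2*c₁₁), 0;
        8*B₃^2*c₁₃, 0, 0]⁆ =
        !![0, -(64*B₃^3*c₁₁), 0; -(64*B₃^3*c₁₁), 0, -(16*B₃^3*c₁₃);
          0, -(16*B₃^3*c₁₃), 0] := by
      rw [hHdef, E_01, E_10]
      ext i j
      fin_cases i <;> fin_cases j <;>
        simp [Ring.lie_def, Matrix.mul_apply, Fin.sum_univ_three,
          Matrix.vecHead, Matrix.vecTail] <;> ring
    rw [← e]; exact L.lie_mem hH hM2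
  -- P := E 1 2 + E 2 1
  have hP : E 1 2 + E 2 1 ∈ L := by
    have e : (48*B₃^3*c₁₃)⁻¹ •
        ((16*B₃^2) • !![0, 4*B₃*c₁₁, 0; 4*B₃*c₁₁, 0, 4*B₃*c₁₃; 0, 4*B₃*c₁₃, 0]
          + !![0, -(64*B₃^3*c₁₁), 0; -(64*B₃^3*c₁₁), 0, -(16*B₃^3*c₁₃);
              0, -(16*B₃^3*c₁₃), 0]) = E 1 2 + E 2 1 := by
      rw [E_12, E_21]
      ext i j
      fin_cases i <;> fin_cases j <;>
        simp [Matrix.vecHead, Matrix.vecTail] <;> (try field_simp) <;> (try ring) <;> (try tauto)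
    rw [← e]
    exact L.smul_mem _ (L.add_mem (L.smul_mem _ hM1) hM3)
  -- Q := E 0 1 + E 1 0
  have hQ : E 0 1 + E 1 0 ∈ L := by
    have e : (4 * B₃ * c₁₁)⁻¹ •
        (!![0, 4*B₃*c₁₁, 0; 4*B₃*c₁₁, 0, 4*B₃*c₁₃; 0, 4*B₃*c₁₃, 0]
          - (4 * B₃ * c₁₃) • (E 1 2 + E 2 1)) = E 0 1 + E 1 0 := by
      rw [E_01, E_10, E_12, E_21]
      ext i j
      fin_cases i <;> fin_cases j <;>
        simp [Matrix.vecHead, Matrix.vecTail] <;> (try field_simp) <;> (try ring) <;> (try tauto)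
    rw [← e]
    exact L.smul_mem _ (L.sub_mem hM1 (L.smul_mem _ hP))
  have h01 : E 0 1 ∈ L := by
    have e : (2 : ℝ)⁻¹ • ((E 0 1 + E 1 0) + (2 * B₃)⁻¹ • H) = E 0 1 := by
      rw [hHdef, E_01, E_10]
      ext i j
      fin_cases i <;> fin_cases j <;>
        simp [Matrix.vecHead, Matrix.vecTail] <;> (try field_simp) <;> (try ring) <;> (try tauto)
    rw [← e]
    exact L.smul_mem _ (L.add_mem hQ (L.smul_mem _ hH))
  have h10 : E 1 0 ∈ L := by
    have e : (2 : ℝ)⁻¹ • ((E 0 1 + E 1 0) - (2 * B₃)⁻¹ • H) = E 1 0 := by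
      rw [hHdef, E_01, E_10]
      ext i j
      fin_cases i <;> fin_cases j <;>
        simp [Matrix.vecHead, Matrix.vecTail] <;> (try field_simp) <;> (try ring) <;> (try tauto)
    rw [← e]
    exact L.smul_mem _ (L.sub_mem hQ (L.smul_mem _ hH))
  have h02 : E 0 2 ∈ L := by
    have e : ⁅E 0 1, E 1 2 + E 2 1⁆ = E 0 2 := by
      rw [E_01, E_12, E_21, E_02]
      ext i j
      fin_cases i <;> fin_cases j <;>
        simp [Ring.lie_def, Matrix.mul_apply, Fin.sum_univ_three,
          Matrix.vecHead, Matrix.vecTail]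
    rw [← e]; exact L.lie_mem h01 hP
  have h12 : E 1 2 ∈ L := by
    have e : ⁅E 1 0, E 0 2⁆ = E 1 2 := by
      rw [E_10, E_02, E_12]
      ext i j
      fin_cases i <;> fin_cases j <;>
        simp [Ring.lie_def, Matrix.mul_apply, Fin.sum_univ_three,
          Matrix.vecHead, Matrix.vecTail]
    rw [← e]; exact L.lie_mem h10 h02
  have h21 : E 2 1 ∈ L := by
    have e : (E 1 2 + E 2 1) - E 1 2 = E 2 1 := by abel
    rw [← e]; exact L.sub_mem hP h12
  have h20 : E 2 0 ∈ L := by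
    have e : ⁅E 2 1, E 1 0⁆ = E 2 0 := by
      rw [E_21, E_10, E_20]
      ext i j
      fin_cases i <;> fin_cases j <;>
        simp [Ring.lie_def, Matrix.mul_apply, Fin.sum_univ_three,
          Matrix.vecHead, Matrix.vecTail]
    rw [← e]; exact L.lie_mem h21 h10
  have h11m : E 1 1 ∈ L := by
    have e : (2 * c₁₁ + 2 * c₃₃)⁻¹ •
        (((2 : ℝ)⁻¹ • D + c₁₃ • (E 0 2 + E 2 0)) - c₃₃ • ⁅E 0 1, E 1 0⁆
          + c₁₁ • ⁅E 1 2, E 2 1⁆) = E 1 1 := by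
      rw [hDdef, E_01, E_10, E_12, E_21, E_02, E_20, E_11]
      ext i j
      fin_cases i <;> fin_cases j <;>
        simp [Ring.lie_def, Matrix.mul_apply, Fin.sum_univ_three,
          Matrix.vecHead, Matrix.vecTail] <;> (try field_simp) <;> (try ring) <;> (try tauto)
    rw [← e]
    exact L.smul_mem _ (L.add_mem (L.sub_mem
      (L.add_mem (L.smul_mem _ hD) (L.smul_mem _ (L.add_mem h02 h20)))
      (L.smul_mem _ (L.lie_mem h01 h10))) (L.smul_mem _ (L.lie_mem h12 h21)))
  have h00 : E 0 0 ∈ L := by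
    have e : ⁅E 0 1, E 1 0⁆ + E 1 1 = E 0 0 := by
      rw [E_01, E_10, E_11, E_00]
      ext i j
      fin_cases i <;> fin_cases j <;>
        simp [Ring.lie_def, Matrix.mul_apply, Fin.sum_univ_three,
          Matrix.vecHead, Matrix.vecTail]
    rw [← e]; exact L.add_mem (L.lie_mem h01 h10) h11m
  have h22 : E 2 2 ∈ L := by
    have e : E 1 1 - ⁅E 1 2, E 2 1⁆ = E 2 2 := by
      rw [E_12, E_21, E_11, E_22]
      ext i j
      fin_cases i <;> fin_cases j <;>
        simp [Ring.lie_def, Matrix.mul_apply, Fin.sum_univ_three,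
          Matrix.vecHead, Matrix.vecTail]
    rw [← e]; exact L.sub_mem h11m (L.lie_mem h12 h21)
  have hE : ∀ i j : Fin 3, E i j ∈ L := by
    intro i j
    fin_cases i <;> fin_cases j <;>
      simpa using (by assumption :
        E _ _ ∈ L)
  rw [eq_top_iff]
  intro x _
  rw [Matrix.matrix_eq_sum_single x]
  rw [← LieSubalgebra.mem_toSubmodule]
  refine Submodule.sum_mem _ fun i _ => Submodule.sum_mem _ fun j _ => ?_
  have e : Matrix.single i j (x i j) = x i j • E i j := by
    simp [E, Matrix.smul_single]
  rw [e]
  exact Submodule.smul_mem _ _ ((LieSubalgebra.mem_toSubmodule _).mpr (hE i j))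
end

section
/- Let 𝓗 = 2·[[0, B₃ + ω₃, ω₂],[−B₃ − ω₃, 0, ω₁],[−ω₂, −ω₁, 0]] and 𝓓 = 2·[[c₃₃, −c₁₂, −c₁₃],[−c₁₂, c₁₁ + c₃₃, −c₂₃],[−c₁₃, −c₂₃, c₁₁]] with all parameters real, set L = −(𝓗 + 𝓓), and suppose ω₂ + c₁₃ > 0. Let x(t) = exp(tL)·(1/2, 0, 0)ᵀ. Then x₃(0) = 0, the derivative of x₃ at t = 0 equals ω₂ + c₁₃ > 0, and consequently there exists t > 0 with x₃(t) > 0; that is, for the merely positive spin dynamics a state initially polarized along the positive x direction acquires a strictly positive z polarization ⟨S_z(t)⟩ at some time t. -/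
open Matrix

attribute [local instance] Matrix.linftyOpNormedRing Matrix.linftyOpNormedAlgebra

/-- Merely positive spin dynamics: with
`𝓗 = 2[[0, B₃+ω₃, ω₂],[−B₃−ω₃, 0, ω₁],[−ω₂, −ω₁, 0]]`,
`𝓓 = 2[[c₃₃, −c₁₂, −c₁₃],[−c₁₂, c₁₁+c₃₃, −c₂₃],[−c₁₃, −c₂₃, c₁₁]]`, `L = −(𝓗 + 𝓓)` and
`ω₂ + c₁₃ > 0`, the trajectory `x(t) = exp(tL)·(1/2,0,0)ᵀ` satisfies `x₃(0) = 0`, its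
third component has derivative `ω₂ + c₁₃ > 0` at `t = 0`, and hence `x₃(t) > 0` for some
`t > 0`: the state initially polarized along `+x` acquires a strictly positive
`z` polarization `⟨S_z(t)⟩`. -/
theorem stmt_19 (B₃ ω₁ ω₂ ω₃ c₁₁ c₁₂ c₁₃ c₂₃ c₃₃ : ℝ) (hpos : 0 < ω₂ + c₁₃) :
    let 𝓗 : Matrix (Fin 3) (Fin 3) ℝ :=
      2 • !![0, B₃ + ω₃, ω₂; -B₃ - ω₃, 0, ω₁; -ω₂, -ω₁, 0]
    let 𝓓 : Matrix (Fin 3) (Fin 3) ℝ :=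
      2 • !![c₃₃, -c₁₂, -c₁₃; -c₁₂, c₁₁ + c₃₃, -c₂₃; -c₁₃, -c₂₃, c₁₁]
    let L : Matrix (Fin 3) (Fin 3) ℝ := -(𝓗 + 𝓓)
    let x : ℝ → Fin 3 → ℝ := fun t => (NormedSpace.exp (t • L)).mulVec ![1 / 2, 0, 0]
    x 0 2 = 0 ∧
    HasDerivAt (fun t => x t 2) (ω₂ + c₁₃) 0 ∧
    ∃ t : ℝ, 0 < t ∧ 0 < x t 2 := by
  intro 𝓗 𝓓 L x
  -- the entry-extraction continuous linear map
  let e : Matrix (Fin 3) (Fin 3) ℝ →ₗ[ℝ] ℝ :=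
    { toFun := fun M => M 2 0
      map_add' := fun M N => rfl
      map_smul' := fun c M => rfl }
  have hx : ∀ t, x t 2 = (NormedSpace.exp (t • L)) 2 0 * (1 / 2) := by
    intro t
    simp [x, Matrix.mulVec, dotProduct, Fin.sum_univ_three]
  have h0 : x 0 2 = 0 := by
    rw [hx]
    simp [NormedSpace.exp_zero]
  have hexp : HasDerivAt (fun t : ℝ => NormedSpace.exp (t • L)) L 0 := by
    have := hasDerivAt_exp_smul_const (𝕂 := ℝ) L 0
    simp only [zero_smul, NormedSpace.exp_zero, one_mul] at this
    exact this
  have hentry : HasDerivAt (fun t : ℝ => (NormedSpace.exp (t • L)) 2 0) (L 2 0) 0 := by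
    have := (e.toContinuousLinearMap.hasFDerivAt (x := NormedSpace.exp ((0:ℝ) • L))).comp_hasDerivAt 0 hexp
    exact this
  have hL20 : L 2 0 * (1 / 2) = ω₂ + c₁₃ := by
    simp [L, 𝓗, 𝓓]
    ring
  have hderiv : HasDerivAt (fun t => x t 2) (ω₂ + c₁₃) 0 := by
    have := (hentry.mul_const (1 / 2))
    rw [hL20] at this
    exact this.congr_of_eventuallyEq (Filter.Eventually.of_forall hx)
  refine ⟨h0, hderiv, ?_⟩
  -- use the positive derivative to find a positive time with positive value
  have hslope := hasDerivAt_iff_tendsto_slope.mp hderiv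
  have hev : ∀ᶠ t in nhdsWithin 0 {(0:ℝ)}ᶜ, 0 < slope (fun t => x t 2) 0 t :=
    hslope.eventually (eventually_gt_nhds hpos)
  have hev' : ∀ᶠ t in nhdsWithin 0 (Set.Ioi 0), 0 < slope (fun t => x t 2) 0 t :=
    hev.filter_mono (nhdsWithin_mono 0 (fun t ht => ne_of_gt ht))
  have hmem : ∀ᶠ t in nhdsWithin 0 (Set.Ioi 0), (0:ℝ) < t := self_mem_nhdsWithin
  obtain ⟨t, hslopet, ht⟩ := (hev'.and hmem).exists
  refine ⟨t, ht, ?_⟩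
  have : slope (fun t => x t 2) 0 t = x t 2 / t := by
    simp [slope, h0, div_eq_inv_mul]
  rw [this] at hslopet
  have := mul_pos hslopet ht
  rwa [div_mul_cancel₀ _ (ne_of_gt ht)] at this
end
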